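/- For any n ≥ 2 and 2 ≤ i ≤ n, A(n,i) ≥ min(A(n−1,i−1), A(n−1,i)). -/

import Mathlib

open Finset

/-- ℓ1 (Hamming) weight of a `q`-ary vector of length `n`. -/
def hw {n q : ℕ} (x : Fin n → Fin q) : ℕ := ∑ k, (x k : ℕ)

/-- `E_q(n,i)`: the set of `q`-ary vectors of length `n` and weight `i`. -/
def lev (q n i : ℕ) : Finset (Fin n → Fin q) := Finset.univ.filter (fun x => hw x = i)

/-- Coordinatewise domination `x ≤ y`. -/
def domLe {n q : ℕ} (x y : Fin n → Fin q) : Prop := ∀ k, (x k : ℕ) ≤ (y k : ℕ)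

instance {n q : ℕ} (x y : Fin n → Fin q) : Decidable (domLe x y) :=
  inferInstanceAs (Decidable (∀ k, (x k : ℕ) ≤ (y k : ℕ)))

/-- `Y` covers `E_q(n,i-1)`: every vector of weight `i-1` is dominated by some `y ∈ Y`. -/
def Covers (q n i : ℕ) (Y : Finset (Fin n → Fin q)) : Prop :=
  ∀ x ∈ lev q n (i - 1), ∃ y ∈ Y, domLe x y

/-- A codeword class at level `i`: a subset of `E_q(n,i)` covering `E_q(n,i-1)`. -/
def IsClass (q n i : ℕ) (Y : Finset (Fin n → Fin q)) : Prop :=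
  Y ⊆ lev q n i ∧ Covers q n i Y

/-- `A_q(n,i)`: the maximum number of pairwise disjoint codeword classes in `E_q(n,i)`. -/
noncomputable def A (q n i : ℕ) : ℕ :=
  sSup {m | ∃ 𝒴 : Finset (Finset (Fin n → Fin q)),
    (∀ Y ∈ 𝒴, IsClass q n i Y) ∧
    (𝒴 : Set (Finset (Fin n → Fin q))).Pairwise Disjoint ∧ 𝒴.card = m}

/- ### Auxiliary lemmas -/

lemma hw_snoc {m : ℕ} (v : Fin m → Fin 2) (b : Fin 2) :
    hw (Fin.snoc v b) = hw v + (b : ℕ) := by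
  simp [hw, Fin.sum_univ_castSucc]

lemma hw_eq_init {m : ℕ} (x : Fin (m+1) → Fin 2) :
    hw x = hw (Fin.init x) + (x (Fin.last m) : ℕ) := by
  conv_lhs => rw [← Fin.snoc_init_self x]
  exact hw_snoc _ _

lemma snoc_inj {m : ℕ} {v v' : Fin m → Fin 2} {b : Fin 2}
    (h : (Fin.snoc v b : Fin (m+1) → Fin 2) = Fin.snoc v' b) : v = v' := by
  funext k
  have := congrFun h (Fin.castSucc k)
  simpa using this

lemma lev_nonempty {m j : ℕ} (h : j ≤ m) : (lev 2 m j).Nonempty := by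
  refine ⟨fun k => if (k : ℕ) < j then 1 else 0, ?_⟩
  simp only [lev, mem_filter, mem_univ, true_and]; simp only [hw]
  have h1 : ∀ k : Fin m,
      (((if (k : ℕ) < j then (1 : Fin 2) else 0) : Fin 2) : ℕ)
        = if (k : ℕ) < j then 1 else 0 := fun k => by split <;> rfl
  rw [Finset.sum_congr rfl (fun k _ => h1 k),
    Fin.sum_univ_eq_sum_range (fun k => if k < j then (1 : ℕ) else 0)]
  rw [← Finset.sum_subset (Finset.range_subset_range.2 h)
    (fun k _ hk => by simp only [Finset.mem_range] at hk ⊢; simp; omega)]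
  have h2 : ∀ k ∈ Finset.range j, (if k < j then (1:ℕ) else 0) = 1 :=
    fun k hk => by simp only [Finset.mem_range] at hk; simp [hk]
  rw [Finset.sum_congr rfl h2, Finset.sum_const, smul_eq_mul, mul_one, Finset.card_range]

lemma class_nonempty {m i : ℕ} {Y : Finset (Fin m → Fin 2)}
    (hY : IsClass 2 m i Y) (h : i - 1 ≤ m) : Y.Nonempty := by
  obtain ⟨x, hx⟩ := lev_nonempty (m := m) (j := i - 1) h
  obtain ⟨y, hy, -⟩ := hY.2 x hx
  exact ⟨y, hy⟩

/-- Concatenation of two classes: append `0` to `Y` and `1` to `Z`. -/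
def conc {m : ℕ} (Y Z : Finset (Fin m → Fin 2)) : Finset (Fin (m+1) → Fin 2) :=
  Y.image (fun v => Fin.snoc v 0) ∪ Z.image (fun v => Fin.snoc v 1)

lemma conc_nonempty {m : ℕ} {Y Z : Finset (Fin m → Fin 2)} (hY : Y.Nonempty) :
    (conc Y Z).Nonempty := by
  obtain ⟨y, hy⟩ := hY
  exact ⟨Fin.snoc y 0, Finset.mem_union_left _ (Finset.mem_image_of_mem _ hy)⟩

lemma conc_disjoint {m : ℕ} {Y Z Y' Z' : Finset (Fin m → Fin 2)}
    (hY : Disjoint Y Y') (hZ : Disjoint Z Z') : Disjoint (conc Y Z) (conc Y' Z') := by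
  rw [Finset.disjoint_left]
  intro w hw1 hw2
  simp only [conc, Finset.mem_union, Finset.mem_image] at hw1 hw2
  rcases hw1 with ⟨v, hv, rfl⟩ | ⟨v, hv, rfl⟩ <;>
    rcases hw2 with ⟨v', hv', he⟩ | ⟨v', hv', he⟩
  · exact Finset.disjoint_left.1 hY hv (snoc_inj he.symm ▸ hv')
  · have := congrFun he (Fin.last m); simp [Fin.snoc_last] at this
  · have := congrFun he (Fin.last m); simp [Fin.snoc_last] at this
  · exact Finset.disjoint_left.1 hZ hv (snoc_inj he.symm ▸ hv')

lemma isClass_conc {m i : ℕ} (hi : 2 ≤ i) (him : i ≤ m + 1)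
    {Y Z : Finset (Fin m → Fin 2)}
    (hY : IsClass 2 m i Y) (hZ : IsClass 2 m (i-1) Z) :
    IsClass 2 (m+1) i (conc Y Z) := by
  constructor
  · intro w hw'
    simp only [conc, Finset.mem_union, Finset.mem_image] at hw'
    simp only [lev, mem_filter, mem_univ, true_and]
    rcases hw' with ⟨v, hv, rfl⟩ | ⟨v, hv, rfl⟩
    · have := hY.1 hv
      simp only [lev, mem_filter, mem_univ, true_and] at this
      rw [hw_snoc]; simpa using this
    · have := hZ.1 hv
      simp only [lev, mem_filter, mem_univ, true_and] at this
      rw [hw_snoc]; simp [this]; omega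
  · intro x hx
    simp only [lev, mem_filter, mem_univ, true_and] at hx
    have hsum := hw_eq_init x
    have hb : (x (Fin.last m) : ℕ) < 2 := (x (Fin.last m)).isLt
    rcases (show (x (Fin.last m) : ℕ) = 0 ∨ (x (Fin.last m) : ℕ) = 1 by omega) with hb0 | hb1
    · -- last bit 0 : use Y
      have hinit : Fin.init x ∈ lev 2 m (i - 1) := by
        simp only [lev, mem_filter, mem_univ, true_and]; omega
      obtain ⟨y, hy, hdom⟩ := hY.2 _ hinit
      refine ⟨Fin.snoc y 0, Finset.mem_union_left _ (Finset.mem_image_of_mem _ hy), ?_⟩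
      intro k
      refine Fin.lastCases ?_ (fun k => ?_) k
      · simp [Fin.snoc_last]; omega
      · simpa [Fin.snoc_castSucc, Fin.init] using hdom k
    · -- last bit 1 : use Z
      have hinit : Fin.init x ∈ lev 2 m (i - 1 - 1) := by
        simp only [lev, mem_filter, mem_univ, true_and]; omega
      obtain ⟨z, hz, hdom⟩ := hZ.2 _ hinit
      refine ⟨Fin.snoc z 1, Finset.mem_union_right _ (Finset.mem_image_of_mem _ hz), ?_⟩
      intro k
      refine Fin.lastCases ?_ (fun k => ?_) k
      · simp [Fin.snoc_last]; omega
      · simpa [Fin.snoc_castSucc, Fin.init] using hdom k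

lemma A_bddAbove (q n i : ℕ) : BddAbove {m | ∃ 𝒴 : Finset (Finset (Fin n → Fin q)),
    (∀ Y ∈ 𝒴, IsClass q n i Y) ∧
    (𝒴 : Set (Finset (Fin n → Fin q))).Pairwise Disjoint ∧ 𝒴.card = m} := by
  refine ⟨Fintype.card (Finset (Fin n → Fin q)), ?_⟩
  rintro m ⟨𝒴, -, -, rfl⟩
  exact Finset.card_le_univ 𝒴

lemma A_spec (q n i : ℕ) : ∃ 𝒴 : Finset (Finset (Fin n → Fin q)),
    (∀ Y ∈ 𝒴, IsClass q n i Y) ∧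
    (𝒴 : Set (Finset (Fin n → Fin q))).Pairwise Disjoint ∧ 𝒴.card = A q n i := by
  have hne : {m | ∃ 𝒴 : Finset (Finset (Fin n → Fin q)),
      (∀ Y ∈ 𝒴, IsClass q n i Y) ∧
      (𝒴 : Set (Finset (Fin n → Fin q))).Pairwise Disjoint ∧ 𝒴.card = m}.Nonempty :=
    ⟨0, ∅, by simp, by simp, by simp⟩
  exact Nat.sSup_mem hne (A_bddAbove q n i)

lemma main_step (m i : ℕ) (hi : 2 ≤ i) (him : i ≤ m + 1) :
    min (A 2 m (i-1)) (A 2 m i) ≤ A 2 (m+1) i := by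
  set k := min (A 2 m (i-1)) (A 2 m i) with hk
  obtain ⟨𝒵, hZclass, hZpw, hZcard⟩ := A_spec 2 m (i-1)
  obtain ⟨𝒴, hYclass, hYpw, hYcard⟩ := A_spec 2 m i
  obtain ⟨𝒵', hZsub, hZcard'⟩ := Finset.exists_subset_card_eq
    (show k ≤ 𝒵.card by rw [hZcard]; exact min_le_left _ _)
  obtain ⟨𝒴', hYsub, hYcard'⟩ := Finset.exists_subset_card_eq
    (show k ≤ 𝒴.card by rw [hYcard]; exact min_le_right _ _)
  -- enumerate the two subfamilies
  let f : Fin k → Finset (Fin m → Fin 2) := fun j => (𝒴'.equivFin.symm (Fin.cast hYcard'.symm j) : _)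
  let g : Fin k → Finset (Fin m → Fin 2) := fun j => (𝒵'.equivFin.symm (Fin.cast hZcard'.symm j) : _)
  have hfmem : ∀ j, f j ∈ 𝒴 := fun j => hYsub (𝒴'.equivFin.symm _).2
  have hgmem : ∀ j, g j ∈ 𝒵 := fun j => hZsub (𝒵'.equivFin.symm _).2
  have hfinj : Function.Injective f := by
    intro a b h
    have := Subtype.ext h
    simpa using (Fin.cast_injective _) (𝒴'.equivFin.symm.injective this)
  have hginj : Function.Injective g := by
    intro a b h
    have := Subtype.ext h
    simpa using (Fin.cast_injective _) (𝒵'.equivFin.symm.injective this)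
  let W : Fin k → Finset (Fin (m+1) → Fin 2) := fun j => conc (f j) (g j)
  have hWclass : ∀ j, IsClass 2 (m+1) i (W j) :=
    fun j => isClass_conc hi him (hYclass _ (hfmem j)) (hZclass _ (hgmem j))
  have hWdisj : ∀ j j', j ≠ j' → Disjoint (W j) (W j') := by
    intro j j' hne
    exact conc_disjoint
      (hYpw (hfmem j) (hfmem j') (fun h => hne (hfinj h)))
      (hZpw (hgmem j) (hgmem j') (fun h => hne (hginj h)))
  have hWinj : Function.Injective W := by
    intro j j' h
    by_contra hne
    have hd := hWdisj j j' hne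
    rw [h] at hd
    have hnonempty : (W j').Nonempty :=
      conc_nonempty (class_nonempty (hYclass _ (hfmem j')) (by omega))
    rw [disjoint_self] at hd
    simp [hd] at hnonempty
  -- the concatenated family
  refine le_csSup (A_bddAbove 2 (m+1) i) ?_
  refine ⟨Finset.image W Finset.univ, ?_, ?_, ?_⟩
  · intro Y hY
    obtain ⟨j, -, rfl⟩ := Finset.mem_image.1 hY
    exact hWclass j
  · intro Y hY Y' hY' hne
    simp only [coe_image, Set.mem_image, mem_coe, coe_univ, Set.image_univ,
      Set.mem_range] at hY hY'
    obtain ⟨j, rfl⟩ := hY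
    obtain ⟨j', rfl⟩ := hY'
    exact hWdisj j j' (fun h => hne (congrArg W h))
  · rw [Finset.card_image_of_injective _ hWinj, Finset.card_univ, Fintype.card_fin]

/-- For n ≥ 2 and 2 ≤ i ≤ n, A(n,i) ≥ min(A(n-1,i-1), A(n-1,i)). -/
theorem stmt_3 (n i : ℕ) (hn : 2 ≤ n) (hi : 2 ≤ i) (hin : i ≤ n) :
    min (A 2 (n - 1) (i - 1)) (A 2 (n - 1) i) ≤ A 2 n i := by
  obtain ⟨m, rfl⟩ : ∃ m, n = m + 1 := ⟨n - 1, by omega⟩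
  simpa using main_step m i hi hin
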